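/- Let G be a countable discrete group, X a compact Hausdorff space, α : G ↷ X an action by homeomorphisms, and let ≺ denote dynamical subequivalence: for closed F and open V, F ≺ V iff there are open U₁,…,Uₙ covering F and group elements s₁,…,sₙ such that s₁U₁,…,sₙUₙ are pairwise disjoint subsets of V. Prove transitivity in the following form: if F is closed, O is open with F ≺ O, and every closed subset of O is ≺ V for an open set V, then F ≺ V. -/
import Mathlib


open scoped Pointwise

/-- Dynamical subequivalence of Kerr: `F ≺ V` iff there are finitely many open sets
`U₁,…,Uₙ` covering `F` and group elements `s₁,…,sₙ` such that the translates `sᵢUᵢ` are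
pairwise disjoint subsets of `V`. -/
def DynSubeq (G : Type*) {X : Type*} [Group G] [MulAction G X] [TopologicalSpace X]
    (F V : Set X) : Prop :=
  ∃ (n : ℕ) (U : Fin n → Set X) (s : Fin n → G),
    (∀ i, IsOpen (U i)) ∧ F ⊆ ⋃ i, U i ∧
    (Pairwise fun i j => Disjoint (s i • U i) (s j • U j)) ∧
    ∀ i, s i • U i ⊆ V

/-- transitivity of dynamical subequivalence: if `F` is closed, `O` open
with `F ≺ O`, and every closed subset of `O` is `≺ V`, then `F ≺ V`. -/
theorem dynSubeq_trans {G X : Type*} [Group G] [Countable G]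
    [TopologicalSpace X] [CompactSpace X] [T2Space X] [MulAction G X]
    (hcont : ∀ g : G, Continuous fun x : X => g • x)
    (F O V : Set X) (hF : IsClosed F) (hO : IsOpen O) (hV : IsOpen V)
    (h1 : DynSubeq G F O)
    (h2 : ∀ F' : Set X, IsClosed F' → F' ⊆ O → DynSubeq G F' V) :
    DynSubeq G F V := by
  haveI : ContinuousConstSMul G X := ⟨hcont⟩
  obtain ⟨n, U, s, hUo, hFU, hUdisj, hUO⟩ := h1
  -- shrink the cover to closed sets
  obtain ⟨C, hFC, hC⟩ := exists_subset_iUnion_closed_subset hF hUo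
    (fun x _ => Set.toFinite _) hFU
  -- the closed set K := ⋃ i, s i • C i ⊆ O
  set K : Set X := ⋃ i, s i • C i with hK
  have hKclosed : IsClosed K := isClosed_iUnion_of_finite fun i => (hC.1 i).smul (s i)
  have hKO : K ⊆ O := Set.iUnion_subset fun i =>
    (Set.smul_set_mono (hC.2 i)).trans (hUO i)
  obtain ⟨m, W, t, hWo, hKW, hWdisj, hWV⟩ := h2 K hKclosed hKO
  -- new cover indexed by Fin n × Fin m
  refine ⟨n * m, fun k => (fun p : Fin n × Fin m =>
      U p.1 ∩ (s p.1)⁻¹ • W p.2) (finProdFinEquiv.symm k),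
    fun k => (fun p : Fin n × Fin m => t p.2 * s p.1) (finProdFinEquiv.symm k),
    ?_, ?_, ?_, ?_⟩
  · intro k
    exact (hUo _).inter ((hWo _).smul _)
  · intro x hx
    obtain ⟨i, hxi⟩ := Set.mem_iUnion.1 (hFC hx)
    have hsx : s i • x ∈ K := Set.mem_iUnion.2 ⟨i, Set.smul_mem_smul_set hxi⟩
    obtain ⟨j, hj⟩ := Set.mem_iUnion.1 (hKW hsx)
    refine Set.mem_iUnion.2 ⟨finProdFinEquiv (i, j), ?_⟩
    simp only [Equiv.symm_apply_apply]
    exact ⟨hC.2 i hxi, by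
      refine Set.mem_smul_set.2 ⟨s i • x, hj, ?_⟩
      simp [inv_smul_smul]⟩
  · intro k l hkl
    have hkl' : finProdFinEquiv.symm k ≠ finProdFinEquiv.symm l := fun h =>
      hkl (finProdFinEquiv.symm.injective h)
    set p := finProdFinEquiv.symm k
    set q := finProdFinEquiv.symm l
    have key : ∀ (p : Fin n × Fin m),
        (t p.2 * s p.1) • (U p.1 ∩ (s p.1)⁻¹ • W p.2)
          = t p.2 • (s p.1 • U p.1 ∩ W p.2) := by
      intro p
      rw [mul_smul, Set.smul_set_inter, smul_inv_smul]
    rw [key, key]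
    rcases eq_or_ne p.2 q.2 with h2eq | h2ne
    · have h1ne : p.1 ≠ q.1 := fun h1 => hkl' (Prod.ext h1 h2eq)
      rw [h2eq]
      refine (Set.disjoint_image_iff (MulAction.injective (t q.2))).2 ?_
      exact ((hUdisj h1ne).mono Set.inter_subset_left Set.inter_subset_left)
    · exact (hWdisj h2ne).mono (Set.smul_set_mono Set.inter_subset_right)
        (Set.smul_set_mono Set.inter_subset_right)
  · intro k
    set p := finProdFinEquiv.symm k
    calc (t p.2 * s p.1) • (U p.1 ∩ (s p.1)⁻¹ • W p.2)
        = t p.2 • (s p.1 • U p.1 ∩ W p.2) := by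
          rw [mul_smul, Set.smul_set_inter, smul_inv_smul]
      _ ⊆ t p.2 • W p.2 := Set.smul_set_mono Set.inter_subset_right
      _ ⊆ V := hWV _
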